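/- arXiv:1205.5773 — 4 statements merged into one kernel-verified Lean document; each statement's English description precedes it below -/
import Mathlib

section
/- Let ψ, u be nonnegative nondecreasing functions on [0,∞), (a_j) a complex sequence converging to L, θ ∈ (0,1), and let G ⊂ {(k,j) ∈ ℤ² : k > j ≥ 0} contain every pair (k, k−1) with k ≥ 1. Writing G_k = {j : (k,j) ∈ G}, one has ψ(|L|)u(|L|) ≤ ψ(|a₀|/(1−θ))u(|L|) + sup_{k≥1} (1/#G_k) Σ_{j ∈ G_k} ψ(|a_k|/(1−θ)) u(|a_j − L|/θ). -/
open Filter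

theorem stmt4 (ψ u : ℝ → ENNReal) (hψ : Monotone ψ) (hu : Monotone u)
    (a : ℕ → ℂ) (L : ℂ) (ha : Tendsto a atTop (nhds L))
    (θ : ℝ) (hθ : θ ∈ Set.Ioo (0 : ℝ) 1)
    (G : ℕ → Finset ℕ)
    (hGlt : ∀ k, ∀ j ∈ G k, j < k)
    (hGdiag : ∀ k, 1 ≤ k → k - 1 ∈ G k) :
    ψ (‖L‖) * u (‖L‖) ≤
      ψ (‖a 0‖ / (1 - θ)) * u (‖L‖) +
        ⨆ k : ℕ, ((G (k + 1)).card : ENNReal)⁻¹ *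
          ∑ j ∈ G (k + 1), ψ (‖a (k + 1)‖ / (1 - θ)) *
            u (‖a j - L‖ / θ) := by
  obtain ⟨hθ0, hθ1⟩ := hθ
  have h1θ : (0:ℝ) < 1 - θ := by linarith
  by_cases hL : L = 0
  · subst hL
    refine le_trans ?_ le_self_add
    gcongr
    exact hψ (by simp only [norm_zero]; positivity)
  · have hLpos : 0 < ‖L‖ := by
      simpa [norm_pos_iff] using hL
    have hex : ∃ k, ‖a k - L‖ ≤ θ * ‖L‖ := by
      obtain ⟨N, hN⟩ := Metric.tendsto_atTop.mp ha (θ * ‖L‖)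
        (by positivity)
      exact ⟨N, by simpa [Complex.dist_eq] using (hN N le_rfl).le⟩
    obtain ⟨k, hk, hmin⟩ : ∃ k, ‖a k - L‖ ≤ θ * ‖L‖ ∧
        ∀ j < k, θ * ‖L‖ < ‖a j - L‖ :=
      ⟨Nat.find hex, Nat.find_spec hex, fun j hj => lt_of_not_ge (Nat.find_min hex hj)⟩
    have hak : ‖L‖ ≤ ‖a k‖ / (1 - θ) := by
      rw [le_div_iff₀ h1θ]
      have htri : ‖L‖ ≤ ‖a k‖ + ‖a k - L‖ := by
        have h := norm_add_le (L - a k) (a k)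
        simp only [sub_add_cancel] at h
        calc ‖L‖ ≤ ‖L - a k‖ + ‖a k‖ := h
          _ = ‖a k‖ + ‖a k - L‖ := by
              rw [norm_sub_rev, add_comm]
      nlinarith [hk]
    rcases Nat.eq_zero_or_pos k with hk0 | hkpos
    · refine le_trans ?_ le_self_add
      gcongr
      exact hψ (hk0 ▸ hak)
    · obtain ⟨m, rfl⟩ : ∃ m, k = m + 1 := ⟨k - 1, (Nat.succ_pred_eq_of_pos hkpos).symm⟩
      refine le_trans ?_ le_add_self
      refine le_trans ?_ (le_iSup _ m)
      have hcard : (G (m + 1)).Nonempty := ⟨m, by simpa using hGdiag (m + 1) (by omega)⟩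
      have hcard0 : ((G (m+1)).card : ENNReal) ≠ 0 := by
        simpa [Finset.card_eq_zero] using hcard.ne_empty
      have hterm : ∀ j ∈ G (m + 1),
          ψ (‖L‖) * u (‖L‖) ≤
          ψ (‖a (m + 1)‖ / (1 - θ)) * u (‖a j - L‖ / θ) := by
        intro j hj
        have hjk := hGlt (m + 1) j hj
        have h2 : ‖L‖ ≤ ‖a j - L‖ / θ := by
          rw [le_div_iff₀ hθ0]
          nlinarith [hmin j hjk]
        exact mul_le_mul' (hψ hak) (hu h2)
      have hsum : ((G (m+1)).card : ENNReal) * (ψ (‖L‖) * u (‖L‖)) ≤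
          ∑ j ∈ G (m + 1), ψ (‖a (m + 1)‖ / (1 - θ)) *
            u (‖a j - L‖ / θ) := by
        calc ((G (m+1)).card : ENNReal) * (ψ (‖L‖) * u (‖L‖))
            = ∑ _j ∈ G (m+1), ψ (‖L‖) * u (‖L‖) := by
              simp [Finset.sum_const, nsmul_eq_mul]
          _ ≤ _ := Finset.sum_le_sum hterm
      calc ψ (‖L‖) * u (‖L‖)
          = ((G (m+1)).card : ENNReal)⁻¹ * (((G (m+1)).card : ENNReal) *
              (ψ (‖L‖) * u (‖L‖))) := by
            rw [← mul_assoc, ENNReal.inv_mul_cancel hcard0 (by simp), one_mul]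
        _ ≤ _ := by gcongr
end

section
/- Let W be a probability density on ℝᵈ with W(x) ≤ C e^{−2δ|x|} for all x. Then for every p ∈ [1,∞) and every f with ∫ f W = 0, ∫ |f(x)|ᵖ W(x) dx ≤ 2C ∫∫ |f(x) − f(y)|ᵖ W(x) e^{−δ|x−y|} dx dy. -/
open MeasureTheory
open scoped ENNReal NNReal

private lemma jensen_aux {α : Type*} [MeasurableSpace α] (ν : Measure α) [IsProbabilityMeasure ν]
    {g : α → ℝ} (hg : AEStronglyMeasurable g ν) {p : ℝ} (hp : 1 ≤ p) :
    (∫⁻ a, ENNReal.ofReal |g a| ∂ν) ^ p ≤ ∫⁻ a, ENNReal.ofReal (|g a| ^ p) ∂ν := by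
  have hp0 : 0 < p := lt_of_lt_of_le one_pos hp
  have h1 : eLpNorm g 1 ν ≤ eLpNorm g (ENNReal.ofReal p) ν :=
    eLpNorm_le_eLpNorm_of_exponent_le (by
      rw [← ENNReal.ofReal_one]; exact ENNReal.ofReal_le_ofReal hp) hg
  rw [eLpNorm_one_eq_lintegral_enorm,
    eLpNorm_eq_lintegral_rpow_enorm_toReal (ENNReal.ofReal_pos.mpr hp0).ne'
      ENNReal.ofReal_ne_top, ENNReal.toReal_ofReal hp0.le] at h1
  have h2 := ENNReal.rpow_le_rpow h1 hp0.le
  rw [← ENNReal.rpow_mul, one_div, inv_mul_cancel₀ hp0.ne', ENNReal.rpow_one] at h2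
  calc (∫⁻ a, ENNReal.ofReal |g a| ∂ν) ^ p
      = (∫⁻ a, ‖g a‖ₑ ∂ν) ^ p := by
        congr 1; apply lintegral_congr; intro a
        rw [← Real.norm_eq_abs, ofReal_norm_eq_enorm]
    _ ≤ ∫⁻ a, ‖g a‖ₑ ^ p ∂ν := h2
    _ = ∫⁻ a, ENNReal.ofReal (|g a| ^ p) ∂ν := by
        apply lintegral_congr; intro a
        rw [← Real.norm_eq_abs, ← ofReal_norm_eq_enorm,
          ENNReal.ofReal_rpow_of_nonneg (norm_nonneg _) hp0.le]

set_option maxHeartbeats 1000000 in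
theorem stmt7 {d : ℕ} (W : EuclideanSpace ℝ (Fin d) → ℝ)
    (hW0 : ∀ x, 0 ≤ W x) (hW1 : ∫ x, W x = 1)
    (C δ : ℝ) (hC : 0 < C) (hδ : 0 < δ)
    (hbound : ∀ x, W x ≤ C * Real.exp (-2 * δ * ‖x‖))
    (p : ℝ) (hp : 1 ≤ p)
    (f : EuclideanSpace ℝ (Fin d) → ℝ) (hf : Measurable f)
    (hfW : Integrable (fun x => f x * W x)) (hmean : ∫ x, f x * W x = 0) :
    ∫⁻ x, ENNReal.ofReal (|f x| ^ p) * ENNReal.ofReal (W x) ≤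
      ENNReal.ofReal (2 * C) *
        ∫⁻ x, ∫⁻ y, ENNReal.ofReal (|f x - f y| ^ p) *
          (ENNReal.ofReal (W x) * ENNReal.ofReal (Real.exp (-δ * ‖x - y‖))) := by
  have hp0 : 0 < p := lt_of_lt_of_le one_pos hp
  -- W is integrable
  have hWint : Integrable W := by
    by_contra h
    rw [integral_undef h] at hW1
    exact one_ne_zero hW1.symm
  -- a measurable version of W
  set U : EuclideanSpace ℝ (Fin d) → ℝ := fun x => C * Real.exp (-2 * δ * ‖x‖) with hU
  have hUmeas : Measurable U := by fun_prop
  set W' : EuclideanSpace ℝ (Fin d) → ℝ :=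
    fun x => min (max (hWint.1.mk W x) 0) (U x) with hW'
  have hW'meas : Measurable W' :=
    ((hWint.1.stronglyMeasurable_mk.measurable.max measurable_const).min hUmeas)
  have hW'0 : ∀ x, 0 ≤ W' x := fun x =>
    le_min (le_max_right _ _) (le_of_lt (by positivity))
  have hW'U : ∀ x, W' x ≤ U x := fun x => min_le_right _ _
  have hW'W : W' =ᵐ[volume] W := by
    filter_upwards [hWint.1.ae_eq_mk] with x hx
    simp only [hW', ← hx, max_eq_left (hW0 x), min_eq_left (hbound x)]
    exact min_eq_left (hbound x)
  -- the probability measure with density W'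
  set ν : Measure (EuclideanSpace ℝ (Fin d)) :=
    volume.withDensity (fun y => ENNReal.ofReal (W' y)) with hν
  have hInt1 : ∫⁻ y, ENNReal.ofReal (W' y) = 1 := by
    have h1 : ∫⁻ y, ENNReal.ofReal (W' y) = ∫⁻ y, ENNReal.ofReal (W y) :=
      lintegral_congr_ae (hW'W.mono fun x hx => by simp only [hx])
    rw [h1, ← ofReal_integral_eq_lintegral_ofReal hWint (Filter.Eventually.of_forall hW0),
      hW1, ENNReal.ofReal_one]
  haveI hνprob : IsProbabilityMeasure ν :=
    ⟨by rw [hν, withDensity_apply _ MeasurableSet.univ, setLIntegral_univ, hInt1]⟩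
  have hconv : ∀ g : EuclideanSpace ℝ (Fin d) → ℝ≥0∞, Measurable g →
      ∫⁻ y, g y ∂ν = ∫⁻ y, g y * ENNReal.ofReal (W' y) := by
    intro g hg
    rw [hν, lintegral_withDensity_eq_lintegral_mul volume hW'meas.ennreal_ofReal hg]
    exact lintegral_congr fun y => mul_comm _ _
  -- key pointwise Jensen bound
  have key : ∀ x, ENNReal.ofReal (|f x| ^ p) ≤
      ∫⁻ y, ENNReal.ofReal (|f x - f y| ^ p) * ENNReal.ofReal (W' y) := by
    intro x
    have h1 : Integrable (fun y => f x * W y) := hWint.const_mul (f x)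
    have hint : Integrable (fun y => (f x - f y) * W y) := by
      have := h1.sub hfW
      refine this.congr (Filter.Eventually.of_forall fun y => by simp only [Pi.sub_apply]; ring)
    have hval : ∫ y, (f x - f y) * W y = f x := by
      have he : ∫ y, (f x - f y) * W y = ∫ y, (f x * W y - f y * W y) := by
        congr 1; funext y; ring
      rw [he, integral_sub h1 hfW, hmean, sub_zero, integral_const_mul, hW1, mul_one]
    have habs : |f x| ≤ ∫ y, |f x - f y| * W y := by
      calc |f x| = |∫ y, (f x - f y) * W y| := by rw [hval]
        _ ≤ ∫ y, |f x - f y| * |W y| := by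
            simpa [Real.norm_eq_abs, abs_mul] using
              norm_integral_le_integral_norm (fun y => (f x - f y) * W y)
        _ = ∫ y, |f x - f y| * W y := by
            congr 1; funext y; rw [abs_of_nonneg (hW0 y)]
    have hintabs : Integrable (fun y => |f x - f y| * W y) := by
      refine hint.abs.congr (Filter.Eventually.of_forall fun y => ?_)
      dsimp only; rw [abs_mul, abs_of_nonneg (hW0 y)]
    have hlin : ENNReal.ofReal (∫ y, |f x - f y| * W y) =
        ∫⁻ y, ENNReal.ofReal (|f x - f y| * W y) :=
      ofReal_integral_eq_lintegral_ofReal hintabs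
        (Filter.Eventually.of_forall fun y => mul_nonneg (abs_nonneg _) (hW0 y))
    have hgmeas : Measurable (fun y => f x - f y) := measurable_const.sub hf
    have hjen := jensen_aux ν (g := fun y => f x - f y)
      hgmeas.aestronglyMeasurable hp
    have hintnonneg : 0 ≤ ∫ y, |f x - f y| * W y :=
      integral_nonneg fun y => mul_nonneg (abs_nonneg _) (hW0 y)
    calc ENNReal.ofReal (|f x| ^ p)
        ≤ ENNReal.ofReal ((∫ y, |f x - f y| * W y) ^ p) :=
          ENNReal.ofReal_le_ofReal (Real.rpow_le_rpow (abs_nonneg _) habs hp0.le)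
      _ = (ENNReal.ofReal (∫ y, |f x - f y| * W y)) ^ p :=
          (ENNReal.ofReal_rpow_of_nonneg hintnonneg hp0.le).symm
      _ = (∫⁻ y, ENNReal.ofReal (|f x - f y|) * ENNReal.ofReal (W y)) ^ p := by
          rw [hlin]; congr 1
          exact lintegral_congr fun y => ENNReal.ofReal_mul (abs_nonneg _)
      _ = (∫⁻ y, ENNReal.ofReal (|f x - f y|) * ENNReal.ofReal (W' y)) ^ p := by
          congr 1
          exact lintegral_congr_ae (hW'W.mono fun y hy => by simp only [hy])
      _ = (∫⁻ y, ENNReal.ofReal |f x - f y| ∂ν) ^ p := by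
          rw [hconv _ hgmeas.abs.ennreal_ofReal]
      _ ≤ ∫⁻ y, ENNReal.ofReal (|f x - f y| ^ p) ∂ν := hjen
      _ = ∫⁻ y, ENNReal.ofReal (|f x - f y| ^ p) * ENNReal.ofReal (W' y) :=
          hconv _ (((Real.continuous_rpow_const hp0.le).measurable.comp
            hgmeas.abs).ennreal_ofReal)
  -- pointwise product bound
  have hB : ∀ x y, W' x * W' y ≤ C * Real.exp (-δ * ‖x - y‖) * (W' x + W' y) := by
    have hexp : ∀ a b : EuclideanSpace ℝ (Fin d), ‖a‖ ≤ ‖b‖ →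
        U b ≤ C * Real.exp (-δ * ‖a - b‖) := by
      intro a b hab
      apply mul_le_mul_of_nonneg_left _ hC.le
      apply Real.exp_le_exp.mpr
      have h1 : ‖a - b‖ ≤ ‖a‖ + ‖b‖ := norm_sub_le a b
      nlinarith [norm_nonneg a, hδ]
    intro x y
    rcases le_total ‖x‖ ‖y‖ with h | h
    · calc W' x * W' y ≤ W' x * U y := mul_le_mul_of_nonneg_left (hW'U y) (hW'0 x)
        _ ≤ W' x * (C * Real.exp (-δ * ‖x - y‖)) :=
            mul_le_mul_of_nonneg_left (hexp x y h) (hW'0 x)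
        _ ≤ C * Real.exp (-δ * ‖x - y‖) * (W' x + W' y) := by
            nlinarith [hW'0 x,
              mul_nonneg (mul_nonneg hC.le (Real.exp_pos (-δ * ‖x - y‖)).le) (hW'0 y)]
    · calc W' x * W' y ≤ U x * W' y := mul_le_mul_of_nonneg_right (hW'U x) (hW'0 y)
        _ ≤ C * Real.exp (-δ * ‖x - y‖) * W' y := by
            apply mul_le_mul_of_nonneg_right _ (hW'0 y)
            have := hexp y x h
            rwa [norm_sub_rev] at this
        _ ≤ C * Real.exp (-δ * ‖x - y‖) * (W' x + W' y) := by
            nlinarith [hW'0 y,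
              mul_nonneg (mul_nonneg hC.le (Real.exp_pos (-δ * ‖x - y‖)).le) (hW'0 x)]
  -- measurability of the integrands on the product space
  have hEmeas : Measurable (fun q : EuclideanSpace ℝ (Fin d) × EuclideanSpace ℝ (Fin d) =>
      ENNReal.ofReal (|f q.1 - f q.2| ^ p)) :=
    ((Real.continuous_rpow_const hp0.le).measurable.comp
      ((hf.comp measurable_fst).sub (hf.comp measurable_snd)).abs).ennreal_ofReal
  have hemeas : Measurable (fun q : EuclideanSpace ℝ (Fin d) × EuclideanSpace ℝ (Fin d) =>
      ENNReal.ofReal (Real.exp (-δ * ‖q.1 - q.2‖))) := by fun_prop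
  have hF1meas : Measurable (fun q : EuclideanSpace ℝ (Fin d) × EuclideanSpace ℝ (Fin d) =>
      ENNReal.ofReal (|f q.1 - f q.2| ^ p) *
        (ENNReal.ofReal (W' q.1) * ENNReal.ofReal (Real.exp (-δ * ‖q.1 - q.2‖)))) :=
    hEmeas.mul (((hW'meas.comp measurable_fst).ennreal_ofReal).mul hemeas)
  have hF2meas : Measurable (fun q : EuclideanSpace ℝ (Fin d) × EuclideanSpace ℝ (Fin d) =>
      ENNReal.ofReal (|f q.1 - f q.2| ^ p) *
        (ENNReal.ofReal (W' q.2) * ENNReal.ofReal (Real.exp (-δ * ‖q.1 - q.2‖)))) :=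
    hEmeas.mul (((hW'meas.comp measurable_snd).ennreal_ofReal).mul hemeas)
  -- symmetry swap
  have hswap : (∫⁻ x, ∫⁻ y, ENNReal.ofReal (|f x - f y| ^ p) *
        (ENNReal.ofReal (W' y) * ENNReal.ofReal (Real.exp (-δ * ‖x - y‖))))
      = ∫⁻ x, ∫⁻ y, ENNReal.ofReal (|f x - f y| ^ p) *
        (ENNReal.ofReal (W' x) * ENNReal.ofReal (Real.exp (-δ * ‖x - y‖))) := by
    rw [lintegral_lintegral_swap hF2meas.aemeasurable]
    apply lintegral_congr; intro a; apply lintegral_congr; intro b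
    rw [abs_sub_comm (f b) (f a), norm_sub_rev b a]
  calc ∫⁻ x, ENNReal.ofReal (|f x| ^ p) * ENNReal.ofReal (W x)
      = ∫⁻ x, ENNReal.ofReal (|f x| ^ p) * ENNReal.ofReal (W' x) :=
        (lintegral_congr_ae (hW'W.mono fun x hx => by simp only [hx])).symm
    _ ≤ ∫⁻ x, (∫⁻ y, ENNReal.ofReal (|f x - f y| ^ p) * ENNReal.ofReal (W' y)) *
          ENNReal.ofReal (W' x) :=
        lintegral_mono fun x => mul_le_mul_left (key x) _
    _ = ∫⁻ x, ∫⁻ y, ENNReal.ofReal (|f x - f y| ^ p) * ENNReal.ofReal (W' y) *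
          ENNReal.ofReal (W' x) :=
        lintegral_congr fun x => (lintegral_mul_const' _ _ ENNReal.ofReal_ne_top).symm
    _ ≤ ∫⁻ x, ∫⁻ y, ENNReal.ofReal C *
          (ENNReal.ofReal (|f x - f y| ^ p) *
              (ENNReal.ofReal (W' x) * ENNReal.ofReal (Real.exp (-δ * ‖x - y‖))) +
            ENNReal.ofReal (|f x - f y| ^ p) *
              (ENNReal.ofReal (W' y) * ENNReal.ofReal (Real.exp (-δ * ‖x - y‖)))) := by
        apply lintegral_mono; intro x; apply lintegral_mono; intro y
        have h1 : ENNReal.ofReal (W' y) * ENNReal.ofReal (W' x)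
            ≤ ENNReal.ofReal C * ENNReal.ofReal (Real.exp (-δ * ‖x - y‖)) *
              (ENNReal.ofReal (W' x) + ENNReal.ofReal (W' y)) := by
          rw [← ENNReal.ofReal_mul (hW'0 y), ← ENNReal.ofReal_add (hW'0 x) (hW'0 y),
            ← ENNReal.ofReal_mul hC.le, ← ENNReal.ofReal_mul (by positivity)]
          exact ENNReal.ofReal_le_ofReal (by rw [mul_comm (W' y)]; exact hB x y)
        calc ENNReal.ofReal (|f x - f y| ^ p) * ENNReal.ofReal (W' y) * ENNReal.ofReal (W' x)
            = ENNReal.ofReal (|f x - f y| ^ p) *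
                (ENNReal.ofReal (W' y) * ENNReal.ofReal (W' x)) := mul_assoc _ _ _
          _ ≤ ENNReal.ofReal (|f x - f y| ^ p) *
                (ENNReal.ofReal C * ENNReal.ofReal (Real.exp (-δ * ‖x - y‖)) *
                  (ENNReal.ofReal (W' x) + ENNReal.ofReal (W' y))) := mul_le_mul_right h1 _
          _ = ENNReal.ofReal C *
                (ENNReal.ofReal (|f x - f y| ^ p) *
                    (ENNReal.ofReal (W' x) * ENNReal.ofReal (Real.exp (-δ * ‖x - y‖))) +
                  ENNReal.ofReal (|f x - f y| ^ p) *
                    (ENNReal.ofReal (W' y) * ENNReal.ofReal (Real.exp (-δ * ‖x - y‖)))) := by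
              ring
    _ = ENNReal.ofReal C *
          ((∫⁻ x, ∫⁻ y, ENNReal.ofReal (|f x - f y| ^ p) *
              (ENNReal.ofReal (W' x) * ENNReal.ofReal (Real.exp (-δ * ‖x - y‖)))) +
            ∫⁻ x, ∫⁻ y, ENNReal.ofReal (|f x - f y| ^ p) *
              (ENNReal.ofReal (W' y) * ENNReal.ofReal (Real.exp (-δ * ‖x - y‖)))) := by
        have inner : ∀ x, (∫⁻ y, ENNReal.ofReal C *
            (ENNReal.ofReal (|f x - f y| ^ p) *
                (ENNReal.ofReal (W' x) * ENNReal.ofReal (Real.exp (-δ * ‖x - y‖))) +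
              ENNReal.ofReal (|f x - f y| ^ p) *
                (ENNReal.ofReal (W' y) * ENNReal.ofReal (Real.exp (-δ * ‖x - y‖)))))
            = ENNReal.ofReal C *
              ((∫⁻ y, ENNReal.ofReal (|f x - f y| ^ p) *
                  (ENNReal.ofReal (W' x) * ENNReal.ofReal (Real.exp (-δ * ‖x - y‖)))) +
                ∫⁻ y, ENNReal.ofReal (|f x - f y| ^ p) *
                  (ENNReal.ofReal (W' y) * ENNReal.ofReal (Real.exp (-δ * ‖x - y‖)))) := by
          intro x
          have hF1x : Measurable fun y => ENNReal.ofReal (|f x - f y| ^ p) *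
              (ENNReal.ofReal (W' x) * ENNReal.ofReal (Real.exp (-δ * ‖x - y‖))) := by
            refine Measurable.mul (g := fun y => ENNReal.ofReal (W' x) * ENNReal.ofReal (Real.exp (-δ * ‖x - y‖))) ?_ (by fun_prop)
            exact ((Real.continuous_rpow_const hp0.le).measurable.comp
              (measurable_const.sub hf).abs).ennreal_ofReal
          rw [lintegral_const_mul' _ _ ENNReal.ofReal_ne_top, lintegral_add_left hF1x]
        have hPmeas : Measurable fun x => ∫⁻ y, ENNReal.ofReal (|f x - f y| ^ p) *
            (ENNReal.ofReal (W' x) * ENNReal.ofReal (Real.exp (-δ * ‖x - y‖))) :=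
          hF1meas.lintegral_prod_right'
        rw [lintegral_congr inner, lintegral_const_mul' _ _ ENNReal.ofReal_ne_top,
          lintegral_add_left hPmeas]
    _ = ENNReal.ofReal (2 * C) *
          ∫⁻ x, ∫⁻ y, ENNReal.ofReal (|f x - f y| ^ p) *
            (ENNReal.ofReal (W' x) * ENNReal.ofReal (Real.exp (-δ * ‖x - y‖))) := by
        rw [hswap, ENNReal.ofReal_mul (by norm_num : (0:ℝ) ≤ 2), ENNReal.ofReal_ofNat]
        ring
    _ = ENNReal.ofReal (2 * C) *
          ∫⁻ x, ∫⁻ y, ENNReal.ofReal (|f x - f y| ^ p) *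
            (ENNReal.ofReal (W x) * ENNReal.ofReal (Real.exp (-δ * ‖x - y‖))) := by
        congr 1
        exact lintegral_congr_ae (hW'W.mono fun x hx => by simp only [hx])
end

section
/- Let Ω ⊂ ℝᵈ be open and bounded such that the open 1/2-neighborhood of Ω is connected. Then there exists a constant C such that for every p ∈ [1,∞) fixed and every f ∈ Lᵖ(Ω) with ∫_Ω f dx = 0, ∫_Ω |f(x)|ᵖ dx ≤ C ∫∫_{Ω×Ω, |x−y|<1} |f(x) − f(y)|ᵖ dx dy. -/
open MeasureTheory Metric ENNReal

namespace Stmt15Aux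


variable {d : ℕ}

noncomputable def Jf (Ω : Set (EuclideanSpace ℝ (Fin d))) (p : ℝ)
    (f : EuclideanSpace ℝ (Fin d) → ℝ) : ℝ≥0∞ :=
  ∫⁻ x in Ω, ∫⁻ y in Ω, ENNReal.ofReal (if ‖x - y‖ < 1 then |f x - f y| ^ p else 0)

lemma base {Ω A B : Set (EuclideanSpace ℝ (Fin d))} {p : ℝ}
    (f : EuclideanSpace ℝ (Fin d) → ℝ)
    (hA : MeasurableSet A) (hB : MeasurableSet B) (hAΩ : A ⊆ Ω) (hBΩ : B ⊆ Ω)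
    (hcross : ∀ x ∈ A, ∀ y ∈ B, dist x y < 1) :
    ∫⁻ x in A, ∫⁻ y in B, ENNReal.ofReal (|f x - f y| ^ p) ≤ Jf Ω p f := by
  have hx : ∀ x ∈ A, (∫⁻ y in B, ENNReal.ofReal (|f x - f y| ^ p)) ≤
      ∫⁻ y in Ω, ENNReal.ofReal (if ‖x - y‖ < 1 then |f x - f y| ^ p else 0) := by
    intro x hxA
    have heq : (∫⁻ y in B, ENNReal.ofReal (|f x - f y| ^ p)) =
        ∫⁻ y in B, ENNReal.ofReal (if ‖x - y‖ < 1 then |f x - f y| ^ p else 0) := by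
      refine setLIntegral_congr_fun hB (fun y hy => ?_)
      rw [if_pos (by rw [← dist_eq_norm]; exact hcross x hxA y hy)]
    rw [heq]
    exact lintegral_mono' (Measure.restrict_mono hBΩ le_rfl) le_rfl
  calc ∫⁻ x in A, ∫⁻ y in B, ENNReal.ofReal (|f x - f y| ^ p)
      ≤ ∫⁻ x in A, ∫⁻ y in Ω,
          ENNReal.ofReal (if ‖x - y‖ < 1 then |f x - f y| ^ p else 0) :=
        setLIntegral_mono' hA hx
    _ ≤ Jf Ω p f := lintegral_mono' (Measure.restrict_mono hAΩ le_rfl) le_rfl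

lemma base_symm {Ω B W : Set (EuclideanSpace ℝ (Fin d))} {p : ℝ}
    (f : EuclideanSpace ℝ (Fin d) → ℝ)
    (hB : MeasurableSet B) (hW : MeasurableSet W) (hBΩ : B ⊆ Ω) (hWΩ : W ⊆ Ω)
    (hcross : ∀ w ∈ W, ∀ y ∈ B, dist w y < 1) :
    ∫⁻ y in B, ∫⁻ w in W, ENNReal.ofReal (|f w - f y| ^ p) ≤ Jf Ω p f := by
  have : ∀ y, (∫⁻ w in W, ENNReal.ofReal (|f w - f y| ^ p)) =
      ∫⁻ w in W, ENNReal.ofReal (|f y - f w| ^ p) :=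
    fun y => lintegral_congr fun w => by rw [abs_sub_comm]
  calc ∫⁻ y in B, ∫⁻ w in W, ENNReal.ofReal (|f w - f y| ^ p)
      = ∫⁻ y in B, ∫⁻ w in W, ENNReal.ofReal (|f y - f w| ^ p) :=
        lintegral_congr fun y => this y
    _ ≤ Jf Ω p f := base f hB hW hBΩ hWΩ
        (fun y hy w hw => by rw [dist_comm]; exact hcross w hw y hy)


lemma triangle_pow {p : ℝ} (hp : 1 ≤ p) (a b c : ℝ) :
    ENNReal.ofReal (|a - c| ^ p) ≤
      (2 : ℝ≥0∞) ^ (p - 1) * (ENNReal.ofReal (|a - b| ^ p) + ENNReal.ofReal (|b - c| ^ p)) := by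
  have hp0 : (0:ℝ) ≤ p := zero_le_one.trans hp
  have h1 : ENNReal.ofReal |a - c| ≤ ENNReal.ofReal |a - b| + ENNReal.ofReal |b - c| := by
    rw [← ENNReal.ofReal_add (abs_nonneg _) (abs_nonneg _)]
    exact ENNReal.ofReal_le_ofReal (abs_sub_le a b c)
  calc ENNReal.ofReal (|a - c| ^ p) = ENNReal.ofReal |a - c| ^ p :=
        (ENNReal.ofReal_rpow_of_nonneg (abs_nonneg _) hp0).symm
    _ ≤ (ENNReal.ofReal |a - b| + ENNReal.ofReal |b - c|) ^ p :=
        ENNReal.rpow_le_rpow h1 hp0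
    _ ≤ (2 : ℝ≥0∞) ^ (p - 1) *
        (ENNReal.ofReal |a - b| ^ p + ENNReal.ofReal |b - c| ^ p) :=
        ENNReal.rpow_add_le_mul_rpow_add_rpow _ _ hp
    _ = (2 : ℝ≥0∞) ^ (p - 1) *
        (ENNReal.ofReal (|a - b| ^ p) + ENNReal.ofReal (|b - c| ^ p)) := by
        rw [ENNReal.ofReal_rpow_of_nonneg (abs_nonneg (a-b)) hp0,
          ENNReal.ofReal_rpow_of_nonneg (abs_nonneg (b-c)) hp0]

lemma step {Ω A B W : Set (EuclideanSpace ℝ (Fin d))} {p : ℝ} (hp : 1 ≤ p)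
    (f : EuclideanSpace ℝ (Fin d) → ℝ)
    (hfm : AEMeasurable f (volume.restrict Ω))
    (hA : MeasurableSet A) (hB : MeasurableSet B) (hW : MeasurableSet W)
    (hAΩ : A ⊆ Ω) (hBΩ : B ⊆ Ω) (hWΩ : W ⊆ Ω)
    (hAfin : volume A ≠ ∞) (hBfin : volume B ≠ ∞)
    (hW0 : volume W ≠ 0) (hWfin : volume W ≠ ∞)
    (hcross : ∀ w ∈ W, ∀ y ∈ B, dist w y < 1)
    {C1 : ℝ≥0∞}
    (hC1 : ∫⁻ x in A, ∫⁻ w in W, ENNReal.ofReal (|f x - f w| ^ p) ≤ C1 * Jf Ω p f) :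
    ∫⁻ x in A, ∫⁻ y in B, ENNReal.ofReal (|f x - f y| ^ p) ≤
      ((2 : ℝ≥0∞) ^ (p - 1) * (volume W)⁻¹ * (volume B * C1 + volume A)) * Jf Ω p f := by
  have hp0 : (0:ℝ) ≤ p := zero_le_one.trans hp
  set c2 : ℝ≥0∞ := (2 : ℝ≥0∞) ^ (p - 1) with hc2
  have hc2top : c2 ≠ ∞ := by
    simp [hc2, ENNReal.rpow_eq_top_iff]
  set cW : ℝ≥0∞ := c2 * (volume W)⁻¹ with hcW
  have hcWtop : cW ≠ ∞ :=
    ENNReal.mul_ne_top hc2top (ENNReal.inv_ne_top.2 hW0)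
  have hfW : AEMeasurable f (volume.restrict W) :=
    hfm.mono_measure (Measure.restrict_mono hWΩ le_rfl)
  set F : EuclideanSpace ℝ (Fin d) → ℝ≥0∞ :=
    fun x => ∫⁻ w in W, ENNReal.ofReal (|f x - f w| ^ p) with hF
  set G : EuclideanSpace ℝ (Fin d) → ℝ≥0∞ :=
    fun y => ∫⁻ w in W, ENNReal.ofReal (|f w - f y| ^ p) with hG
  -- pointwise bound
  have key : ∀ x y, ENNReal.ofReal (|f x - f y| ^ p) ≤ cW * F x + cW * G y := by
    intro x y
    have hmeas1 : AEMeasurable (fun w => ENNReal.ofReal (|f x - f w| ^ p))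
        (volume.restrict W) := by
      refine (ENNReal.measurable_ofReal.comp
        ((Real.continuous_rpow_const hp0).measurable.comp measurable_abs)).comp_aemeasurable ?_
      exact aemeasurable_const.sub hfW
    have hmul : ENNReal.ofReal (|f x - f y| ^ p) * volume W ≤ c2 * (F x + G y) := by
      have h1 : ENNReal.ofReal (|f x - f y| ^ p) * volume W =
          ∫⁻ w in W, ENNReal.ofReal (|f x - f y| ^ p) := by
        rw [setLIntegral_const]
      rw [h1]
      calc ∫⁻ w in W, ENNReal.ofReal (|f x - f y| ^ p)
          ≤ ∫⁻ w in W, c2 * (ENNReal.ofReal (|f x - f w| ^ p)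
              + ENNReal.ofReal (|f w - f y| ^ p)) :=
            lintegral_mono fun w => triangle_pow hp _ _ _
        _ = c2 * (F x + G y) := by
            rw [lintegral_const_mul' _ _ hc2top, lintegral_add_left' hmeas1]
    have hWW : volume W * (volume W)⁻¹ = 1 := ENNReal.mul_inv_cancel hW0 hWfin
    calc ENNReal.ofReal (|f x - f y| ^ p)
        = ENNReal.ofReal (|f x - f y| ^ p) * volume W * (volume W)⁻¹ := by
          rw [mul_assoc, hWW, mul_one]
      _ ≤ c2 * (F x + G y) * (volume W)⁻¹ := mul_le_mul_left hmul _
      _ = cW * F x + cW * G y := by rw [hcW]; ring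
  set H : ℝ≥0∞ := ∫⁻ y in B, G y with hH
  have hHJ : H ≤ Jf Ω p f :=
    base_symm f hB hW hBΩ hWΩ hcross
  have inner : ∀ x, (∫⁻ y in B, ENNReal.ofReal (|f x - f y| ^ p)) ≤
      cW * F x * volume B + cW * H := by
    intro x
    calc ∫⁻ y in B, ENNReal.ofReal (|f x - f y| ^ p)
        ≤ ∫⁻ y in B, (cW * F x + cW * G y) := lintegral_mono fun y => key x y
      _ = cW * F x * volume B + ∫⁻ y in B, cW * G y := by
          rw [lintegral_add_left measurable_const, setLIntegral_const]
      _ = cW * F x * volume B + cW * H := by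
          rw [lintegral_const_mul' _ _ hcWtop]
  calc ∫⁻ x in A, ∫⁻ y in B, ENNReal.ofReal (|f x - f y| ^ p)
      ≤ ∫⁻ x in A, (cW * F x * volume B + cW * H) := lintegral_mono fun x => inner x
    _ = ∫⁻ x in A, ((cW * volume B) * F x + cW * H) :=
        lintegral_congr fun x => by ring_nf
    _ = (cW * volume B) * (∫⁻ x in A, F x) + (cW * H) * volume A := by
        rw [lintegral_add_right' _ aemeasurable_const, setLIntegral_const,
          lintegral_const_mul' _ _ (ENNReal.mul_ne_top hcWtop hBfin)]
    _ ≤ (cW * volume B) * (C1 * Jf Ω p f) + (cW * Jf Ω p f) * volume A := by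
        gcongr
    _ = ((2 : ℝ≥0∞) ^ (p - 1) * (volume W)⁻¹ * (volume B * C1 + volume A)) * Jf Ω p f := by
        rw [hcW, hc2]; ring



lemma hold {α : Type*} [MeasurableSpace α] (μ : Measure α) {φ : α → ℝ≥0∞}
    (hφ : AEMeasurable φ μ) {p : ℝ} (hp : 1 ≤ p) :
    (∫⁻ a, φ a ∂μ) ^ p ≤ (∫⁻ a, φ a ^ p ∂μ) * (μ Set.univ) ^ (p - 1) := by
  have hp0 : (0:ℝ) ≤ p := zero_le_one.trans hp
  rcases eq_or_lt_of_le hp with h1 | h1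
  · simp [← h1]
  · have hp' : p ≠ 0 := by positivity
    set q : ℝ := Real.conjExponent p with hq
    have hpq : p.HolderConjugate q := Real.HolderConjugate.conjExponent h1
    have h := ENNReal.lintegral_mul_le_Lp_mul_Lq μ hpq hφ
      (aemeasurable_const : AEMeasurable (fun _ => (1:ℝ≥0∞)) μ)
    simp only [Pi.mul_apply, mul_one, ENNReal.one_rpow, lintegral_one] at h
    have h2 : (∫⁻ a, φ a ∂μ) ^ p ≤
        ((∫⁻ a, φ a ^ p ∂μ) ^ (1/p) * (μ Set.univ) ^ (1/q)) ^ p :=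
      ENNReal.rpow_le_rpow h hp0
    rw [ENNReal.mul_rpow_of_nonneg _ _ hp0, ← ENNReal.rpow_mul, ← ENNReal.rpow_mul,
      one_div_mul_cancel hp', ENNReal.rpow_one] at h2
    have hq' : 1/q * p = p - 1 := by
      have h3 : p⁻¹ + q⁻¹ = 1 := hpq.inv_add_inv_eq_one
      have : 1/q = 1 - 1/p := by rw [one_div, one_div]; linarith
      rw [this, sub_mul, one_mul, one_div, inv_mul_cancel₀ hp']
    rwa [hq'] at h2

lemma jensen {d : ℕ} {Ω : Set (EuclideanSpace ℝ (Fin d))} {p : ℝ} (hp : 1 ≤ p)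
    (f : EuclideanSpace ℝ (Fin d) → ℝ)
    (hfm : AEMeasurable f (volume.restrict Ω)) (hfi : IntegrableOn f Ω volume)
    (hmean : ∫ x in Ω, f x = 0) (h0 : volume Ω ≠ 0) (hfin : volume Ω ≠ ∞) :
    ∫⁻ x in Ω, ENNReal.ofReal (|f x| ^ p) ≤
      (volume Ω)⁻¹ * ∫⁻ x in Ω, ∫⁻ y in Ω, ENNReal.ofReal (|f x - f y| ^ p) := by
  have hp0 : (0:ℝ) ≤ p := zero_le_one.trans hp
  set v : ℝ≥0∞ := volume Ω with hv
  set V : ℝ := v.toReal with hV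
  have hVpos : 0 < V := ENNReal.toReal_pos h0 hfin
  have hvp_ne_top : v ^ p ≠ ∞ := ENNReal.rpow_ne_top_of_nonneg hp0 hfin
  have hvp_ne_zero : v ^ p ≠ 0 :=
    (ENNReal.rpow_pos (pos_iff_ne_zero.2 h0) hfin).ne'
  have hvq_ne_top : v ^ (p-1) ≠ ∞ := ENNReal.rpow_ne_top_of_nonneg (by linarith) hfin
  -- pointwise estimate
  have key : ∀ x, v ^ p * ENNReal.ofReal (|f x| ^ p) ≤
      (∫⁻ y in Ω, ENNReal.ofReal (|f x - f y| ^ p)) * v ^ (p - 1) := by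
    intro x
    have hgint : IntegrableOn (fun y => f x - f y) Ω volume :=
      (integrableOn_const hfin).sub hfi
    have hsum : ∫ y in Ω, (f x - f y) = V * f x := by
      rw [integral_sub (integrableOn_const (C := f x) hfin) hfi, hmean,
        setIntegral_const, sub_zero, smul_eq_mul, measureReal_def]
    have step1 : ENNReal.ofReal (V * |f x|) ≤
        ∫⁻ y in Ω, ENNReal.ofReal |f x - f y| := by
      have habs : V * |f x| ≤ ∫ y in Ω, |f x - f y| := by
        have h1 : |∫ y in Ω, (f x - f y)| ≤ ∫ y in Ω, |f x - f y| := by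
          simpa [Real.norm_eq_abs] using
            norm_integral_le_integral_norm (μ := volume.restrict Ω) (fun y => f x - f y)
        rw [hsum] at h1
        calc V * |f x| = |V * f x| := by
              rw [abs_mul, abs_of_nonneg hVpos.le]
          _ ≤ _ := h1
      calc ENNReal.ofReal (V * |f x|) ≤ ENNReal.ofReal (∫ y in Ω, |f x - f y|) :=
            ENNReal.ofReal_le_ofReal habs
        _ = ∫⁻ y in Ω, ENNReal.ofReal |f x - f y| := by
            rw [ofReal_integral_eq_lintegral_ofReal hgint.abs
              (Filter.Eventually.of_forall fun y => abs_nonneg _)]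
    have hφm : AEMeasurable (fun y => ENNReal.ofReal (|f x - f y|)) (volume.restrict Ω) := by
      refine (ENNReal.measurable_ofReal.comp measurable_abs).comp_aemeasurable ?_
      exact aemeasurable_const.sub hfm
    have step2 : (ENNReal.ofReal (V * |f x|)) ^ p ≤
        (∫⁻ y in Ω, ENNReal.ofReal (|f x - f y|) ^ p) * v ^ (p - 1) := by
      have := hold (volume.restrict Ω) hφm hp
      rw [Measure.restrict_apply_univ] at this
      exact le_trans (ENNReal.rpow_le_rpow step1 hp0) this
    have lhs_eq : (ENNReal.ofReal (V * |f x|)) ^ p = v ^ p * ENNReal.ofReal (|f x| ^ p) := by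
      rw [ENNReal.ofReal_rpow_of_nonneg (by positivity : (0:ℝ) ≤ V * |f x|) hp0,
        Real.mul_rpow hVpos.le (abs_nonneg _),
        ENNReal.ofReal_mul (by positivity),
        ← ENNReal.ofReal_rpow_of_nonneg hVpos.le hp0, hV, ENNReal.ofReal_toReal hfin]
    have rhs_eq : (∫⁻ y in Ω, ENNReal.ofReal (|f x - f y|) ^ p)
        = ∫⁻ y in Ω, ENNReal.ofReal (|f x - f y| ^ p) :=
      lintegral_congr fun y => ENNReal.ofReal_rpow_of_nonneg (abs_nonneg _) hp0
    rw [lhs_eq, rhs_eq] at step2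
    exact step2
  -- integrate
  have hint : v ^ p * ∫⁻ x in Ω, ENNReal.ofReal (|f x| ^ p) ≤
      (∫⁻ x in Ω, ∫⁻ y in Ω, ENNReal.ofReal (|f x - f y| ^ p)) * v ^ (p - 1) := by
    rw [← lintegral_const_mul' _ _ hvp_ne_top, ← lintegral_mul_const' _ _ hvq_ne_top]
    exact lintegral_mono fun x => key x
  have hfinal : (v ^ p)⁻¹ * ((∫⁻ x in Ω, ∫⁻ y in Ω, ENNReal.ofReal (|f x - f y| ^ p)) * v ^ (p-1))
      = v⁻¹ * ∫⁻ x in Ω, ∫⁻ y in Ω, ENNReal.ofReal (|f x - f y| ^ p) := by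
    rw [← ENNReal.rpow_neg, ← ENNReal.rpow_neg_one v]
    calc v ^ (-p) * ((∫⁻ x in Ω, ∫⁻ y in Ω, ENNReal.ofReal (|f x - f y| ^ p)) * v ^ (p-1))
        = (v ^ (p-1) * v ^ (-p)) * ∫⁻ x in Ω, ∫⁻ y in Ω, ENNReal.ofReal (|f x - f y| ^ p) := by
          ring
      _ = v ^ (-1 : ℝ) * ∫⁻ x in Ω, ∫⁻ y in Ω, ENNReal.ofReal (|f x - f y| ^ p) := by
          rw [← ENNReal.rpow_add _ _ h0 hfin, show p - 1 + -p = -1 by ring]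
  calc ∫⁻ x in Ω, ENNReal.ofReal (|f x| ^ p)
      = (v ^ p)⁻¹ * (v ^ p * ∫⁻ x in Ω, ENNReal.ofReal (|f x| ^ p)) := by
        rw [← mul_assoc, ENNReal.inv_mul_cancel hvp_ne_zero hvp_ne_top, one_mul]
    _ ≤ (v ^ p)⁻¹ * ((∫⁻ x in Ω, ∫⁻ y in Ω, ENNReal.ofReal (|f x - f y| ^ p)) * v ^ (p-1)) :=
        mul_le_mul_right hint _
    _ = v⁻¹ * ∫⁻ x in Ω, ∫⁻ y in Ω, ENNReal.ofReal (|f x - f y| ^ p) := hfinal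


lemma chain_conn {d : ℕ} {Ω : Set (EuclideanSpace ℝ (Fin d))}
    (hconn : IsConnected (Metric.thickening (1 / 2) Ω)) {a : EuclideanSpace ℝ (Fin d)}
    (ha : a ∈ Ω) :
    ∀ b ∈ Ω, Relation.ReflTransGen (fun x y => y ∈ Ω ∧ dist x y < 1) a b := by
  set rel : EuclideanSpace ℝ (Fin d) → EuclideanSpace ℝ (Fin d) → Prop :=
    fun x y => y ∈ Ω ∧ dist x y < 1 with hrel
  by_contra hcon
  push_neg at hcon
  obtain ⟨b, hbΩ, hb⟩ := hcon
  set A : Set (EuclideanSpace ℝ (Fin d)) :=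
    {x | x ∈ Ω ∧ Relation.ReflTransGen rel a x} with hA
  have hAΩ : A ⊆ Ω := fun x hx => hx.1
  have hcover : Metric.thickening (1/2) Ω ⊆
      Metric.thickening (1/2) A ∪ Metric.thickening (1/2) (Ω \ A) := by
    rw [← Metric.thickening_union, Set.union_diff_cancel hAΩ]
  have h1 : (Metric.thickening (1/2) Ω ∩ Metric.thickening (1/2) A).Nonempty := by
    refine ⟨a, Metric.self_subset_thickening (by norm_num) Ω ha,
      Metric.self_subset_thickening (by norm_num) A ⟨ha, Relation.ReflTransGen.refl⟩⟩
  have h2 : (Metric.thickening (1/2) Ω ∩ Metric.thickening (1/2) (Ω \ A)).Nonempty := by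
    refine ⟨b, Metric.self_subset_thickening (by norm_num) Ω hbΩ,
      Metric.self_subset_thickening (by norm_num) _ ⟨hbΩ, fun hbA => hb hbA.2⟩⟩
  obtain ⟨z, -, hzA, hzB⟩ := hconn.isPreconnected _ _
    Metric.isOpen_thickening Metric.isOpen_thickening hcover h1 h2
  obtain ⟨x, hxA, hzx⟩ := Metric.mem_thickening_iff.1 hzA
  obtain ⟨y, hyB, hzy⟩ := Metric.mem_thickening_iff.1 hzB
  have hxy : dist x y < 1 := by
    calc dist x y ≤ dist x z + dist z y := dist_triangle _ _ _
      _ = dist z x + dist z y := by rw [dist_comm z x]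
      _ < 1/2 + 1/2 := by exact add_lt_add hzx hzy
      _ = 1 := by norm_num
  exact hyB.2 ⟨hyB.1, hxA.2.tail ⟨hyB.1, hxy⟩⟩

end Stmt15Aux
theorem stmt15 {d : ℕ} (hd : 1 ≤ d) (Ω : Set (EuclideanSpace ℝ (Fin d)))
    (hΩopen : IsOpen Ω) (hΩbdd : Bornology.IsBounded Ω)
    (hconn : IsConnected (Metric.thickening (1 / 2) Ω)) :
    ∀ p : ℝ, 1 ≤ p → ∃ C : ℝ, 0 < C ∧
      ∀ f : EuclideanSpace ℝ (Fin d) → ℝ,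
        MemLp f (ENNReal.ofReal p) (volume.restrict Ω) →
        IntegrableOn f Ω volume → (∫ x in Ω, f x = 0) →
        ∫⁻ x in Ω, ENNReal.ofReal (|f x| ^ p) ≤
          ENNReal.ofReal C *
            ∫⁻ x in Ω, ∫⁻ y in Ω,
              ENNReal.ofReal (if ‖x - y‖ < 1 then |f x - f y| ^ p else 0) := by
  intro p hp
  classical
  have hp0 : (0:ℝ) ≤ p := zero_le_one.trans hp
  obtain ⟨z0, hz0⟩ := hconn.nonempty
  obtain ⟨a0, ha0, -⟩ := Metric.mem_thickening_iff.1 hz0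
  have hΩne : Ω.Nonempty := ⟨a0, ha0⟩
  have hfin : volume Ω ≠ ⊤ := hΩbdd.measure_lt_top.ne
  have h0 : volume Ω ≠ 0 := (hΩopen.measure_pos volume hΩne).ne'
  have hfinsub : ∀ S : Set (EuclideanSpace ℝ (Fin d)), S ⊆ Ω → volume S ≠ ⊤ :=
    fun S hS => ((measure_mono hS).trans_lt hfin.lt_top).ne
  set P : Set (EuclideanSpace ℝ (Fin d)) → Set (EuclideanSpace ℝ (Fin d)) → Prop :=
    fun A B => ∃ C : ℝ≥0∞, C ≠ ⊤ ∧ ∀ f : EuclideanSpace ℝ (Fin d) → ℝ,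
      AEMeasurable f (volume.restrict Ω) →
      ∫⁻ x in A, ∫⁻ y in B, ENNReal.ofReal (|f x - f y| ^ p) ≤ C * Stmt15Aux.Jf Ω p f
    with hPdef
  have hmono : ∀ A B B' : Set (EuclideanSpace ℝ (Fin d)), B' ⊆ B → P A B → P A B' := by
    rintro A B B' hsub ⟨C, hCt, hC⟩
    exact ⟨C, hCt, fun f hf => le_trans (lintegral_mono fun x =>
      lintegral_mono' (Measure.restrict_mono hsub le_rfl) le_rfl) (hC f hf)⟩
  have hbase : ∀ A B : Set (EuclideanSpace ℝ (Fin d)), MeasurableSet A → MeasurableSet B →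
      A ⊆ Ω → B ⊆ Ω → (∀ x ∈ A, ∀ y ∈ B, dist x y < 1) → P A B := by
    intro A B hA hB hAΩ hBΩ hcr
    exact ⟨1, one_ne_top, fun f hf => by
      rw [one_mul]; exact Stmt15Aux.base f hA hB hAΩ hBΩ hcr⟩
  have hstep : ∀ A W B : Set (EuclideanSpace ℝ (Fin d)), MeasurableSet A → MeasurableSet W →
      MeasurableSet B → A ⊆ Ω → W ⊆ Ω → B ⊆ Ω → volume W ≠ 0 →
      (∀ w ∈ W, ∀ y ∈ B, dist w y < 1) → P A W → P A B := by
    rintro A W B hA hW hB hAΩ hWΩ hBΩ hW0 hcr ⟨C1, hC1t, hC1⟩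
    refine ⟨(2:ℝ≥0∞) ^ (p - 1) * (volume W)⁻¹ * (volume B * C1 + volume A), ?_, fun f hf =>
      Stmt15Aux.step hp f hf hA hB hW hAΩ hBΩ hWΩ (hfinsub A hAΩ) (hfinsub B hBΩ)
        hW0 (hfinsub W hWΩ) hcr (hC1 f hf)⟩
    refine ENNReal.mul_ne_top (ENNReal.mul_ne_top ?_ (ENNReal.inv_ne_top.2 hW0)) ?_
    · simp [ENNReal.rpow_eq_top_iff]
    · exact ENNReal.add_ne_top.2 ⟨ENNReal.mul_ne_top (hfinsub B hBΩ) hC1t, hfinsub A hAΩ⟩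
  have hvol0 : ∀ x : EuclideanSpace ℝ (Fin d), x ∈ Ω → ∀ r : ℝ, 0 < r →
      volume (Metric.ball x r ∩ Ω) ≠ 0 := by
    intro x hx r hr
    exact ((Metric.isOpen_ball.inter hΩopen).measure_pos volume
      ⟨x, Metric.mem_ball_self hr, hx⟩).ne'
  have hmeasU : ∀ (x : EuclideanSpace ℝ (Fin d)) (r : ℝ),
      MeasurableSet (Metric.ball x r ∩ Ω) :=
    fun x r => measurableSet_ball.inter hΩopen.measurableSet
  -- chaining: the pair lemma
  have hpair : ∀ a ∈ Ω, ∀ b ∈ Ω,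
      P (Metric.ball a 8⁻¹ ∩ Ω) (Metric.ball b 8⁻¹ ∩ Ω) := by
    intro a ha b hb
    have hreach := Stmt15Aux.chain_conn hconn ha b hb
    have key : ∀ c, Relation.ReflTransGen (fun x y => y ∈ Ω ∧ dist x y < 1) a c →
        c ∈ Ω ∧ ∃ r : ℝ, 0 < r ∧ r ≤ 8⁻¹ ∧
          P (Metric.ball a 8⁻¹ ∩ Ω) (Metric.ball c r ∩ Ω) := by
      intro c hc
      induction hc with
      | refl =>
        refine ⟨ha, 8⁻¹, by norm_num, le_rfl, hbase _ _ (hmeasU a _) (hmeasU a _)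
          Set.inter_subset_right Set.inter_subset_right ?_⟩
        intro u hu v hv
        calc dist u v ≤ dist u a + dist a v := dist_triangle _ _ _
          _ = dist u a + dist v a := by rw [dist_comm a v]
          _ < 8⁻¹ + 8⁻¹ := add_lt_add (Metric.mem_ball.1 hu.1) (Metric.mem_ball.1 hv.1)
          _ < 1 := by norm_num
      | @tail m c' hxm hrel ih =>
        obtain ⟨hmΩ, r, hr0, hr8, hPr⟩ := ih
        obtain ⟨hcΩ, hdmc⟩ := hrel
        have h3 : 0 < (1 - dist m c')/3 := by linarith
        set s : ℝ := min r ((1 - dist m c')/3) with hs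
        set t : ℝ := min 8⁻¹ ((1 - dist m c')/3) with ht
        have hs0 : 0 < s := lt_min hr0 h3
        have ht0 : 0 < t := lt_min (by norm_num) h3
        have hPW : P (Metric.ball a 8⁻¹ ∩ Ω) (Metric.ball m s ∩ Ω) :=
          hmono _ _ _ (Set.inter_subset_inter_left Ω
            (Metric.ball_subset_ball (min_le_left _ _))) hPr
        refine ⟨hcΩ, t, ht0, min_le_left _ _, hstep _ _ _ (hmeasU a _) (hmeasU m _)
          (hmeasU c' _) Set.inter_subset_right Set.inter_subset_right Set.inter_subset_right
          (hvol0 m hmΩ s hs0) ?_ hPW⟩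
        intro w hw y hy
        have h1 : dist w m < s := Metric.mem_ball.1 hw.1
        have h2 : dist y c' < t := Metric.mem_ball.1 hy.1
        have hsle : s ≤ (1 - dist m c')/3 := min_le_right _ _
        have htle : t ≤ (1 - dist m c')/3 := min_le_right _ _
        calc dist w y ≤ dist w m + dist m c' + dist c' y := dist_triangle4 w m c' y
          _ = dist w m + dist m c' + dist y c' := by rw [dist_comm c' y]
          _ < 1 := by linarith
    obtain ⟨-, r, hr0, hr8, hPr⟩ := key b hreach
    refine hstep _ _ _ (hmeasU a _) (hmeasU b _) (hmeasU b _)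
      Set.inter_subset_right Set.inter_subset_right Set.inter_subset_right
      (hvol0 b hb r hr0) ?_ hPr
    intro w hw y hy
    have h1 : dist w b < r := Metric.mem_ball.1 hw.1
    have h2 : dist y b < 8⁻¹ := Metric.mem_ball.1 hy.1
    have : (8:ℝ)⁻¹ + 8⁻¹ < 1 := by norm_num
    calc dist w y ≤ dist w b + dist b y := dist_triangle _ _ _
      _ = dist w b + dist y b := by rw [dist_comm b y]
      _ < 1 := by linarith
  -- finite cover of Ω
  have hcpt : IsCompact (closure Ω) := hΩbdd.isCompact_closure
  have hcov : closure Ω ⊆ ⋃ c : Ω, Metric.ball (c : EuclideanSpace ℝ (Fin d)) 8⁻¹ := by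
    intro u hu
    obtain ⟨cpt, hcptΩ, hdist⟩ := Metric.mem_closure_iff.1 hu 8⁻¹ (by norm_num)
    exact Set.mem_iUnion.2 ⟨⟨cpt, hcptΩ⟩, Metric.mem_ball.2 hdist⟩
  obtain ⟨T, hT⟩ := hcpt.elim_finite_subcover _ (fun c : Ω => Metric.isOpen_ball) hcov
  set U : Ω → Set (EuclideanSpace ℝ (Fin d)) :=
    fun c => Metric.ball (c : EuclideanSpace ℝ (Fin d)) 8⁻¹ ∩ Ω with hU
  choose Cp hCpt hCp using fun a b : Ω => hpair (a : EuclideanSpace ℝ (Fin d)) a.2 b b.2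
  set Csum : ℝ≥0∞ := (volume Ω)⁻¹ * ∑ a ∈ T, ∑ b ∈ T, Cp a b with hCsum
  have hCsum_ne : Csum ≠ ⊤ := by
    refine ENNReal.mul_ne_top (ENNReal.inv_ne_top.2 h0) ?_
    rw [ENNReal.sum_ne_top]
    intro a _
    rw [ENNReal.sum_ne_top]
    intro b _
    exact hCpt a b
  refine ⟨Csum.toReal + 1, by positivity, ?_⟩
  intro f hfLp hfint hfmean
  -- replace f by a measurable representative
  have hfae : AEMeasurable f (volume.restrict Ω) := hfLp.aestronglyMeasurable.aemeasurable
  set g := hfae.mk f with hg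
  have hgm : Measurable g := hfae.measurable_mk
  have hfg : f =ᵐ[volume.restrict Ω] g := hfae.ae_eq_mk
  have hLHS : ∫⁻ x in Ω, ENNReal.ofReal (|f x| ^ p) = ∫⁻ x in Ω, ENNReal.ofReal (|g x| ^ p) :=
    lintegral_congr_ae (hfg.mono fun x hx => by simp only [hx])
  have hJ : Stmt15Aux.Jf Ω p f = Stmt15Aux.Jf Ω p g := by
    refine lintegral_congr_ae (hfg.mono fun x hx => ?_)
    exact lintegral_congr_ae (hfg.mono fun y hy => by simp only [hx, hy])
  have hgint : IntegrableOn g Ω volume := hfint.congr hfg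
  have hgmean : ∫ x in Ω, g x = 0 := by
    rw [← integral_congr_ae hfg]; exact hfmean
  -- splitting the double integral over the cover
  have hmle : volume.restrict Ω ≤ ∑ c ∈ T, volume.restrict (U c) := by
    refine Measure.le_iff.2 fun s hs => ?_
    rw [Measure.finset_sum_apply]
    simp only [Measure.restrict_apply hs]
    calc volume (s ∩ Ω) ≤ volume (⋃ c ∈ T, s ∩ U c) := by
          refine measure_mono fun x hx => ?_
          obtain ⟨c, hcT, hball⟩ := Set.mem_iUnion₂.1 (hT (subset_closure hx.2))
          exact Set.mem_biUnion hcT ⟨hx.1, hball, hx.2⟩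
      _ ≤ ∑ c ∈ T, volume (s ∩ U c) := measure_biUnion_finset_le _ _
  have hDsum : (∫⁻ x in Ω, ∫⁻ y in Ω, ENNReal.ofReal (|g x - g y| ^ p)) ≤
      (∑ a ∈ T, ∑ b ∈ T, Cp a b) * Stmt15Aux.Jf Ω p g := by
    have hinner_pt : ∀ x, (∫⁻ y in Ω, ENNReal.ofReal (|g x - g y| ^ p)) ≤
        ∑ b ∈ T, ∫⁻ y in U b, ENNReal.ofReal (|g x - g y| ^ p) := by
      intro x
      rw [← lintegral_finset_sum_measure]
      exact lintegral_mono' hmle le_rfl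
    have hmeas_b : ∀ b : Ω,
        Measurable fun x => ∫⁻ y in U b, ENNReal.ofReal (|g x - g y| ^ p) := by
      intro b
      apply Measurable.lintegral_prod_right'
        (f := fun z : EuclideanSpace ℝ (Fin d) × EuclideanSpace ℝ (Fin d) =>
          ENNReal.ofReal (|g z.1 - g z.2| ^ p))
      exact ENNReal.measurable_ofReal.comp
        (((Real.continuous_rpow_const hp0).measurable).comp
          (measurable_abs.comp ((hgm.comp measurable_fst).sub (hgm.comp measurable_snd))))
    calc (∫⁻ x in Ω, ∫⁻ y in Ω, ENNReal.ofReal (|g x - g y| ^ p))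
        ≤ ∑ a ∈ T, ∫⁻ x in U a, ∫⁻ y in Ω, ENNReal.ofReal (|g x - g y| ^ p) := by
          rw [← lintegral_finset_sum_measure]
          exact lintegral_mono' hmle le_rfl
      _ ≤ ∑ a ∈ T, ∑ b ∈ T, Cp a b * Stmt15Aux.Jf Ω p g := by
          refine Finset.sum_le_sum fun a haT => ?_
          calc (∫⁻ x in U a, ∫⁻ y in Ω, ENNReal.ofReal (|g x - g y| ^ p))
              ≤ ∫⁻ x in U a, ∑ b ∈ T, ∫⁻ y in U b, ENNReal.ofReal (|g x - g y| ^ p) :=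
                lintegral_mono fun x => hinner_pt x
            _ = ∑ b ∈ T, ∫⁻ x in U a, ∫⁻ y in U b, ENNReal.ofReal (|g x - g y| ^ p) :=
                lintegral_finset_sum T (fun b _ => hmeas_b b)
            _ ≤ ∑ b ∈ T, Cp a b * Stmt15Aux.Jf Ω p g :=
                Finset.sum_le_sum fun b hbT => hCp a b g hgm.aemeasurable
      _ = (∑ a ∈ T, ∑ b ∈ T, Cp a b) * Stmt15Aux.Jf Ω p g := by
          rw [Finset.sum_mul]
          exact Finset.sum_congr rfl fun a _ => by rw [Finset.sum_mul]
  have hjen := Stmt15Aux.jensen hp g hgm.aemeasurable hgint hgmean h0 hfin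
  have hfinal : (∫⁻ x in Ω, ENNReal.ofReal (|g x| ^ p)) ≤ Csum * Stmt15Aux.Jf Ω p g := by
    calc (∫⁻ x in Ω, ENNReal.ofReal (|g x| ^ p))
        ≤ (volume Ω)⁻¹ * ∫⁻ x in Ω, ∫⁻ y in Ω, ENNReal.ofReal (|g x - g y| ^ p) := hjen
      _ ≤ (volume Ω)⁻¹ * ((∑ a ∈ T, ∑ b ∈ T, Cp a b) * Stmt15Aux.Jf Ω p g) :=
          mul_le_mul_right hDsum _
      _ = Csum * Stmt15Aux.Jf Ω p g := by rw [hCsum, mul_assoc]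
  have hJf_def : Stmt15Aux.Jf Ω p f =
      ∫⁻ x in Ω, ∫⁻ y in Ω,
        ENNReal.ofReal (if ‖x - y‖ < 1 then |f x - f y| ^ p else 0) := rfl
  rw [hLHS, ← hJf_def]
  calc (∫⁻ x in Ω, ENNReal.ofReal (|g x| ^ p)) ≤ Csum * Stmt15Aux.Jf Ω p g := hfinal
    _ = Csum * Stmt15Aux.Jf Ω p f := by rw [hJ]
    _ ≤ ENNReal.ofReal (Csum.toReal + 1) * Stmt15Aux.Jf Ω p f := by
        refine mul_le_mul_left ?_ _
        calc Csum = ENNReal.ofReal Csum.toReal := (ENNReal.ofReal_toReal hCsum_ne).symm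
          _ ≤ ENNReal.ofReal (Csum.toReal + 1) := ENNReal.ofReal_le_ofReal (by linarith)
end

section
/- Let Ω ⊂ ℝᵈ be open and bounded, O₁ an open Euclidean ball of radius at most 1/2 contained in Ω, and for n ≥ 2 define Oₙ = {y ∈ ℝᵈ : m(B(y,1) ∩ O_{n−1} ∩ Ω) > c/n} for a sufficiently small constant c > 0 so that O₁ ⊂ O₂. If the 1/2-neighborhood of Ω is connected, then Ω ⊂ ∪_{n≥1} Oₙ, and by compactness of the closure of Ω, there is a finite N with Ω ⊂ O_N. -/
open MeasureTheory Metric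

lemma aux_open_superlevel {d : ℕ} (S : Set (EuclideanSpace ℝ (Fin d))) (t : ℝ) (ht : 0 ≤ t) :
    IsOpen {y : EuclideanSpace ℝ (Fin d) | t < (volume (ball y 1 ∩ S)).toReal} := by
  rw [Metric.isOpen_iff]
  intro y hy
  simp only [Set.mem_setOf_eq] at hy
  have hfin : ∀ (y' : EuclideanSpace ℝ (Fin d)), volume (ball y' 1 ∩ S) ≠ ⊤ :=
    fun y' => ((measure_mono Set.inter_subset_left).trans_lt measure_ball_lt_top).ne
  have hlt : ENNReal.ofReal t < volume (ball y 1 ∩ S) :=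
    (ENNReal.ofReal_lt_iff_lt_toReal ht (hfin y)).mpr hy
  have hU : (⋃ k : ℕ, (ball y (1 - 1/(k+1)) ∩ S)) = ball y 1 ∩ S := by
    ext p
    simp only [Set.mem_iUnion, Set.mem_inter_iff, mem_ball]
    constructor
    · rintro ⟨k, hk, hS⟩
      refine ⟨hk.trans_le ?_, hS⟩
      have : (0:ℝ) < 1/((k:ℝ)+1) := by positivity
      linarith
    · rintro ⟨hk, hS⟩
      obtain ⟨k, hk'⟩ := exists_nat_one_div_lt (show (0:ℝ) < 1 - dist p y by linarith)
      exact ⟨k, by linarith, hS⟩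
  have hmono : Monotone (fun k : ℕ => ball y (1 - 1/((k:ℝ)+1)) ∩ S) := by
    intro a b hab
    apply Set.inter_subset_inter_left
    apply ball_subset_ball
    have h1 : (1:ℝ)/((b:ℝ)+1) ≤ 1/((a:ℝ)+1) := by
      apply one_div_le_one_div_of_le (by positivity)
      have : (a:ℝ) ≤ b := by exact_mod_cast hab
      linarith
    linarith
  have hsup := hmono.directed_le.measure_iUnion (μ := volume)
  rw [hU] at hsup
  rw [hsup] at hlt
  obtain ⟨k, hk⟩ := lt_iSup_iff.mp hlt
  refine ⟨1/((k:ℝ)+1), by positivity, ?_⟩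
  intro y' hy'
  simp only [Set.mem_setOf_eq]
  have hsub : ball y (1 - 1/((k:ℝ)+1)) ⊆ ball y' 1 := by
    intro p hp
    rw [mem_ball] at hp hy' ⊢
    have h1 := dist_triangle p y y'
    rw [dist_comm y y'] at h1
    linarith
  have hlt' : ENNReal.ofReal t < volume (ball y' 1 ∩ S) :=
    hk.trans_le (measure_mono (Set.inter_subset_inter_left _ hsub))
  exact (ENNReal.ofReal_lt_iff_lt_toReal ht (hfin y')).mp hlt'

theorem stmt16 {d : ℕ} (hd : 1 ≤ d) (Ω : Set (EuclideanSpace ℝ (Fin d)))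
    (hΩopen : IsOpen Ω) (hΩbdd : Bornology.IsBounded Ω)
    (O : ℕ → Set (EuclideanSpace ℝ (Fin d)))
    (z : EuclideanSpace ℝ (Fin d)) (r : ℝ) (hr : 0 < r) (hr2 : r ≤ 1 / 2)
    (hO1 : O 1 = ball z r) (hO1Ω : O 1 ⊆ Ω)
    (c : ℝ) (hc : 0 < c)
    (hOdef : ∀ n : ℕ, 2 ≤ n →
      O n = {y | c / n < (volume (ball y 1 ∩ O (n - 1) ∩ Ω)).toReal})
    (hO12 : O 1 ⊆ O 2)
    (hconn : IsConnected (Metric.thickening (1 / 2) Ω)) :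
    (Ω ⊆ ⋃ n : ℕ, O (n + 1)) ∧ ∃ N : ℕ, 1 ≤ N ∧ Ω ⊆ O N := by
  have hfin : ∀ (y : EuclideanSpace ℝ (Fin d)) (S : Set (EuclideanSpace ℝ (Fin d))),
      volume (ball y 1 ∩ S) ≠ ⊤ :=
    fun y' S => ((measure_mono Set.inter_subset_left).trans_lt measure_ball_lt_top).ne
  -- monotonicity
  have mono : ∀ n : ℕ, O (n+1) ⊆ O (n+2) := by
    intro n
    induction n with
    | zero => exact hO12
    | succ k ih =>
      intro y hy
      rw [hOdef (k+2) (by omega)] at hy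
      rw [hOdef (k+3) (by omega)]
      have e1 : k + 2 - 1 = k + 1 := rfl
      have e2 : k + 3 - 1 = k + 2 := rfl
      simp only [Set.mem_setOf_eq, e1, e2] at hy ⊢
      have hsub : ball y 1 ∩ O (k+1) ∩ Ω ⊆ ball y 1 ∩ O (k+2) ∩ Ω := by
        rintro p ⟨⟨h1, h2⟩, h3⟩; exact ⟨⟨h1, ih h2⟩, h3⟩
      have hm : (volume (ball y 1 ∩ O (k+1) ∩ Ω)).toReal
          ≤ (volume (ball y 1 ∩ O (k+2) ∩ Ω)).toReal := by
        refine (ENNReal.toReal_le_toReal ?_ ?_).mpr (measure_mono hsub)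
        · rw [Set.inter_assoc]; exact hfin y _
        · rw [Set.inter_assoc]; exact hfin y _
      have hlt : c / ((k:ℝ)+3) < c / ((k:ℝ)+2) := by
        apply div_lt_div_of_pos_left hc (by positivity); linarith
      push_cast at hy ⊢
      simp only [Set.inter_assoc] at hy hm ⊢
      linarith
  have chain : ∀ m n : ℕ, 1 ≤ m → m ≤ n → O m ⊆ O n := by
    intro m n hm hmn
    induction n, hmn using Nat.le_induction with
    | base => exact subset_rfl
    | succ n hn ih =>
      obtain ⟨k, rfl⟩ : ∃ k, n = k + 1 := ⟨n - 1, by omega⟩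
      exact ih.trans (mono k)
  -- openness
  have hopen : ∀ n : ℕ, IsOpen (O (n+1)) := by
    intro n
    match n with
    | 0 => rw [hO1]; exact isOpen_ball
    | Nat.succ k =>
      rw [hOdef (k+2) (by omega)]
      simp only [Nat.add_sub_cancel, Set.inter_assoc]
      exact aux_open_superlevel (O (k+1) ∩ Ω) _ (le_of_lt (by positivity))
  set Oall : Set (EuclideanSpace ℝ (Fin d)) := ⋃ n : ℕ, O (n+1) with hOall
  have hOallOpen : IsOpen Oall := isOpen_iUnion hopen
  -- key emptiness lemma
  have key : ∀ b, b ∉ Oall → ball b 1 ∩ Oall ∩ Ω = ∅ := by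
    intro b hb
    have hzero : volume (ball b 1 ∩ Oall ∩ Ω) = 0 := by
      have hsets : ball b 1 ∩ Oall ∩ Ω = ⋃ n : ℕ, (ball b 1 ∩ O (n+1) ∩ Ω) := by
        rw [hOall, Set.inter_iUnion, Set.iUnion_inter]
      have hdir : Directed (· ⊆ ·) (fun n : ℕ => ball b 1 ∩ O (n+1) ∩ Ω) := by
        apply Monotone.directed_le
        intro a b' hab
        exact Set.inter_subset_inter_left _
          (Set.inter_subset_inter_right _ (chain (a+1) (b'+1) (by omega) (by omega)))
      have hbound : ∀ n : ℕ, volume (ball b 1 ∩ O (n+1) ∩ Ω)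
          ≤ ENNReal.ofReal (c / ((n:ℝ)+2)) := by
        intro n
        have hbn : b ∉ O (n+2) := fun h => hb (Set.mem_iUnion.2 ⟨n+1, h⟩)
        rw [hOdef (n+2) (by omega)] at hbn
        have e1 : n + 2 - 1 = n + 1 := rfl
        simp only [Set.mem_setOf_eq, e1, not_lt] at hbn
        push_cast at hbn
        refine (ENNReal.le_ofReal_iff_toReal_le ?_ (by positivity)).mpr hbn
        rw [Set.inter_assoc]; exact hfin b _
      rw [hsets, hdir.measure_iUnion]
      refine le_antisymm ?_ zero_le
      apply ENNReal.le_of_forall_pos_le_add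
      intro ε hε _
      rw [zero_add]
      obtain ⟨k, hk⟩ := exists_nat_one_div_lt (show (0:ℝ) < (ε:ℝ) / c by positivity)
      have hck : c / ((k:ℝ)+2) ≤ (ε:ℝ) := by
        have h2 : c * (1/((k:ℝ)+1)) < c * ((ε:ℝ)/c) := mul_lt_mul_of_pos_left hk hc
        have h3 : c * ((ε:ℝ)/c) = (ε:ℝ) := by field_simp
        have h4 : c / ((k:ℝ)+2) ≤ c * (1/((k:ℝ)+1)) := by
          rw [mul_one_div]
          exact div_le_div_of_nonneg_left hc.le (by positivity) (by linarith)
        linarith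
      refine iSup_le fun n => ?_
      calc volume (ball b 1 ∩ O (n+1) ∩ Ω)
          ≤ volume (ball b 1 ∩ O (max n k + 1) ∩ Ω) := by
            apply measure_mono
            exact Set.inter_subset_inter_left _
              (Set.inter_subset_inter_right _ (chain (n+1) (max n k + 1) (by omega)
                (by omega)))
        _ ≤ ENNReal.ofReal (c / (((max n k : ℕ) : ℝ)+2)) := hbound _
        _ ≤ ENNReal.ofReal (c / ((k:ℝ)+2)) := by
            apply ENNReal.ofReal_le_ofReal
            apply div_le_div_of_nonneg_left (le_of_lt hc) (by positivity)
            have : (k:ℝ) ≤ ((max n k : ℕ) : ℝ) := by exact_mod_cast le_max_right n k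
            linarith
        _ ≤ ENNReal.ofReal (ε:ℝ) := ENNReal.ofReal_le_ofReal hck
        _ = (ε : ENNReal) := ENNReal.ofReal_coe_nnreal
    by_contra hne
    have hopen' : IsOpen (ball b 1 ∩ Oall ∩ Ω) := (isOpen_ball.inter hOallOpen).inter hΩopen
    have := hopen'.measure_pos volume (Set.nonempty_iff_ne_empty.mpr hne)
    exact absurd hzero (ne_of_gt this)
  have hzmem : z ∈ O 1 := by rw [hO1]; exact mem_ball_self hr
  have hzOall : z ∈ Oall := Set.mem_iUnion.2 ⟨0, hzmem⟩
  -- main: Ω ⊆ Oall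
  have main : Ω ⊆ Oall := by
    by_contra hcon
    obtain ⟨x, hxΩ, hxO⟩ := Set.not_subset.mp hcon
    set U := Metric.thickening (1/2) (Ω ∩ Oall) with hU
    set V := Metric.thickening (1/2) (Ω \ Oall) with hV
    have hUopen : IsOpen U := isOpen_thickening
    have hVopen : IsOpen V := isOpen_thickening
    have hcover : Metric.thickening (1/2) Ω ⊆ U ∪ V := by
      intro p hp
      obtain ⟨ω, hω, hd'⟩ := Metric.mem_thickening_iff.mp hp
      by_cases hcase : ω ∈ Oall
      · exact Or.inl (Metric.mem_thickening_iff.mpr ⟨ω, ⟨hω, hcase⟩, hd'⟩)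
      · exact Or.inr (Metric.mem_thickening_iff.mpr ⟨ω, ⟨hω, hcase⟩, hd'⟩)
    have hdisj : U ∩ V = ∅ := by
      rw [Set.eq_empty_iff_forall_notMem]
      rintro p ⟨hpU, hpV⟩
      obtain ⟨a, ha, hda⟩ := Metric.mem_thickening_iff.mp hpU
      obtain ⟨b, hbm, hdb⟩ := Metric.mem_thickening_iff.mp hpV
      have hab : a ∈ ball b 1 ∩ Oall ∩ Ω := by
        refine ⟨⟨?_, ha.2⟩, ha.1⟩
        rw [mem_ball]
        have h1 := dist_triangle a p b
        rw [dist_comm a p] at h1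
        linarith
      rw [key b hbm.2] at hab
      exact hab
    have hTz : z ∈ Metric.thickening ((1:ℝ)/2) Ω :=
      Metric.self_subset_thickening (by norm_num) _ (hO1Ω hzmem)
    have hTx : x ∈ Metric.thickening ((1:ℝ)/2) Ω :=
      Metric.self_subset_thickening (by norm_num) _ hxΩ
    have hzU : z ∈ U := Metric.self_subset_thickening (by norm_num) _ ⟨hO1Ω hzmem, hzOall⟩
    have hxV : x ∈ V := Metric.self_subset_thickening (by norm_num) _ ⟨hxΩ, hxO⟩
    obtain ⟨p, -, hpUV⟩ := hconn.isPreconnected U V hUopen hVopen hcover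
      ⟨z, hTz, hzU⟩ ⟨x, hTx, hxV⟩
    rw [Set.eq_empty_iff_forall_notMem] at hdisj
    exact hdisj p hpUV
  refine ⟨main, ?_⟩
  -- closure Ω ⊆ Oall
  have hclosure : closure Ω ⊆ Oall := by
    intro x hx
    by_contra hxn
    obtain ⟨ω, hω, hd'⟩ := Metric.mem_closure_iff.mp hx 1 one_pos
    have : ω ∈ ball x 1 ∩ Oall ∩ Ω := by
      refine ⟨⟨?_, main hω⟩, hω⟩
      rw [mem_ball, dist_comm]; exact hd'
    rw [key x hxn] at this
    exact this
  have hcpt : IsCompact (closure Ω) := hΩbdd.isCompact_closure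
  obtain ⟨t, ht⟩ := hcpt.elim_finite_subcover (fun n : ℕ => O (n+1)) hopen hclosure
  refine ⟨t.sup id + 1, by omega, ?_⟩
  intro x hx
  obtain ⟨i, hi, hxi⟩ := Set.mem_iUnion₂.mp (ht (subset_closure hx))
  exact chain (i+1) (t.sup id + 1) (by omega)
    (by have := Finset.le_sup (f := id) hi; simp only [id_eq] at this; omega) hxi
end
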